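/- Let w in S_n be vexillary with essential boxes e_i = (q_i, p_i) ordered so that p_1 ≤ ... ≤ p_s and q_1 ≥ ... ≥ q_s, and set k_i = k_w(q_i, p_i). Then 0 ≤ k_1 < k_2 < ... < k_s ≤ n, and q_i - p_i + k_i > q_{i+1} - p_{i+1} + k_{i+1} for 1 ≤ i ≤ s-1, and q_s - p_s + k_s > 0. -/

import Mathlib

/-- 0-indexed rank function (equals k_w(q+1,p+1) of the paper's 1-indexed one). -/
def kfn {n : ℕ} (w : Equiv.Perm (Fin n)) (q p : ℕ) : ℕ :=
  (Finset.univ.filter (fun s : Fin n => (s : ℕ) ≤ p ∧ q < (w s : ℕ))).card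

/-- The Rothe diagram of w (0-indexed). -/
def rothe {n : ℕ} (w : Equiv.Perm (Fin n)) : Set (ℕ × ℕ) :=
  {b | ∃ hj : b.2 < n, b.1 < (w ⟨b.2, hj⟩ : ℕ) ∧
       ∃ hi : b.1 < n, b.2 < (w.symm ⟨b.1, hi⟩ : ℕ)}

/-- The essential set: south-east corners of the Rothe diagram. -/
def essSet {n : ℕ} (w : Equiv.Perm (Fin n)) : Set (ℕ × ℕ) :=
  {b | b ∈ rothe w ∧ (b.1 + 1, b.2) ∉ rothe w ∧ (b.1, b.2 + 1) ∉ rothe w}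

/-- w avoids the pattern 2143. -/
def Vexillary {n : ℕ} (w : Equiv.Perm (Fin n)) : Prop :=
  ¬ ∃ a b c d : Fin n, a < b ∧ b < c ∧ c < d ∧ w b < w a ∧ w a < w d ∧ w d < w c

namespace Stmt6Aux

/-- Basic facts from membership in the Rothe diagram. -/
lemma ess1 {n : ℕ} {w : Equiv.Perm (Fin n)} {q p : ℕ} (h : (q, p) ∈ essSet w) :
    ∃ (hpn : p < n) (hqn : q < n),
      q < (w ⟨p, hpn⟩ : ℕ) ∧ p < (w.symm ⟨q, hqn⟩ : ℕ) := by
  obtain ⟨⟨hpn, hw, hqn, hwi⟩, -, -⟩ := h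
  exact ⟨hpn, hqn, hw, hwi⟩

/-- For an essential box `(q,p)` we have `w (p+1) ≤ q`. -/
lemma ess_col {n : ℕ} {w : Equiv.Perm (Fin n)} {q p : ℕ} (h : (q, p) ∈ essSet w) :
    ∃ hp1 : p + 1 < n, (w ⟨p + 1, hp1⟩ : ℕ) ≤ q := by
  obtain ⟨hpn, hqn, hw, hwi⟩ := ess1 h
  have hp1 : p + 1 < n := lt_of_le_of_lt hwi (w.symm ⟨q, hqn⟩).isLt
  refine ⟨hp1, ?_⟩
  by_contra hlt
  push_neg at hlt
  obtain ⟨-, -, h2⟩ := h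
  apply h2
  refine ⟨hp1, hlt, hqn, ?_⟩
  rcases lt_or_eq_of_le (Nat.succ_le_of_lt hwi) with h' | h'
  · exact h'
  · exfalso
    have h3 : (⟨p + 1, hp1⟩ : Fin n) = w.symm ⟨q, hqn⟩ := Fin.ext h'
    have h4 : w ⟨p + 1, hp1⟩ = ⟨q, hqn⟩ := by rw [h3]; simp
    rw [h4] at hlt
    exact absurd hlt (lt_irrefl q)

/-- For an essential box `(q,p)` there is `t ≤ p` with `w t = q + 1`. -/
lemma ess_row {n : ℕ} {w : Equiv.Perm (Fin n)} {q p : ℕ} (h : (q, p) ∈ essSet w) :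
    ∃ t : Fin n, (t : ℕ) ≤ p ∧ (w t : ℕ) = q + 1 := by
  obtain ⟨hpn, hqn, hw, hwi⟩ := ess1 h
  rcases eq_or_lt_of_le (Nat.succ_le_of_lt hw) with h' | h'
  · exact ⟨⟨p, hpn⟩, le_rfl, h'.symm⟩
  · have hq1 : q + 1 < n := lt_trans h' (w ⟨p, hpn⟩).isLt
    refine ⟨w.symm ⟨q + 1, hq1⟩, ?_, by simp⟩
    by_contra hgt
    push_neg at hgt
    obtain ⟨-, h2, -⟩ := h
    exact h2 ⟨hpn, h', hq1, hgt⟩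

end Stmt6Aux

open Stmt6Aux in
/-- If w is vexillary and its essential boxes e_i = (q_i, p_i) are enumerated
south-west to north-east (weakly increasing columns p, weakly decreasing rows q),
with k_i = k_w(q_i,p_i), then: k is strictly increasing with k_i ≤ n, the numbers
q_i − p_i + k_i are strictly decreasing, and q_s − p_s + k_s > 0.
(Boxes are 0-indexed: the paper's (q,p) is our ((e i).1 + 1, (e i).2 + 1), and
q − p + k is unchanged by this shift.) -/
theorem stmt6 (n s : ℕ) (w : Equiv.Perm (Fin n)) (hvex : Vexillary w)
    (e : Fin s → ℕ × ℕ) (hinj : Function.Injective e)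
    (hrange : Set.range e = essSet w)
    (hp : Monotone fun i => (e i).2) (hq : Antitone fun i => (e i).1) :
    (∀ i j : Fin s, i < j → kfn w (e i).1 (e i).2 < kfn w (e j).1 (e j).2) ∧
    (∀ i : Fin s, kfn w (e i).1 (e i).2 ≤ n) ∧
    (∀ i j : Fin s, i < j →
      ((e j).1 : ℤ) - (e j).2 + kfn w (e j).1 (e j).2
        < ((e i).1 : ℤ) - (e i).2 + kfn w (e i).1 (e i).2) ∧
    (∀ i : Fin s, 0 < ((e i).1 : ℤ) - (e i).2 + kfn w (e i).1 (e i).2) := by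
  have hess : ∀ i : Fin s, ((e i).1, (e i).2) ∈ essSet w := by
    intro i
    have h : e i ∈ essSet w := by rw [← hrange]; exact Set.mem_range_self i
    simpa using h
  have F : ∀ i : Fin s, ∃ (hpn : (e i).2 < n) (hqn : (e i).1 < n),
      (e i).1 < (w ⟨(e i).2, hpn⟩ : ℕ) ∧ (e i).2 < (w.symm ⟨(e i).1, hqn⟩ : ℕ) :=
    fun i => ess1 (hess i)
  -- (a) strict increase of k
  have hlt : ∀ i j : Fin s, i < j → kfn w (e i).1 (e i).2 < kfn w (e j).1 (e j).2 := by
    intro i j hij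
    obtain ⟨hpni, hqni, hwi, hwii⟩ := F i
    obtain ⟨hpnj, hqnj, hwj, hwij⟩ := F j
    have hpp : (e i).2 ≤ (e j).2 := hp hij.le
    have hqq : (e j).1 ≤ (e i).1 := hq hij.le
    unfold kfn
    apply Finset.card_lt_card
    have hsub : Finset.univ.filter (fun t : Fin n => (t : ℕ) ≤ (e i).2 ∧ (e i).1 < (w t : ℕ))
        ⊆ Finset.univ.filter (fun t : Fin n => (t : ℕ) ≤ (e j).2 ∧ (e j).1 < (w t : ℕ)) := by
      intro t ht
      simp only [Finset.mem_filter, Finset.mem_univ, true_and] at ht ⊢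
      exact ⟨ht.1.trans hpp, lt_of_le_of_lt hqq ht.2⟩
    rw [Finset.ssubset_iff_of_subset hsub]
    rcases lt_or_eq_of_le hpp with hplt | hpeq
    · refine ⟨⟨(e j).2, hpnj⟩, Finset.mem_filter.mpr ⟨Finset.mem_univ _, le_rfl, hwj⟩, ?_⟩
      intro hmem
      have h1 := (Finset.mem_filter.mp hmem).2.1
      simp only at h1
      omega
    · have hqlt : (e j).1 < (e i).1 := by
        rcases lt_or_eq_of_le hqq with h | h
        · exact h
        · exact absurd (hinj (Prod.ext_iff.mpr ⟨h.symm, hpeq⟩)) hij.ne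
      obtain ⟨t, htle, htval⟩ := ess_row (hess j)
      refine ⟨t, Finset.mem_filter.mpr ⟨Finset.mem_univ _, htle, by omega⟩, ?_⟩
      intro hmem
      have h1 := (Finset.mem_filter.mp hmem).2.2
      omega
  -- (c) strict decrease of q - p + k
  have hdec : ∀ i j : Fin s, i < j →
      ((e j).1 : ℤ) - (e j).2 + kfn w (e j).1 (e j).2
        < ((e i).1 : ℤ) - (e i).2 + kfn w (e i).1 (e i).2 := by
    intro i j hij
    obtain ⟨hpni, hqni, hwi, hwii⟩ := F i
    obtain ⟨hpnj, hqnj, hwj, hwij⟩ := F j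
    have hpp : (e i).2 ≤ (e j).2 := hp hij.le
    have hqq : (e j).1 ≤ (e i).1 := hq hij.le
    set q := (e i).1 with hqd
    set p := (e i).2 with hpd
    set q' := (e j).1 with hqd'
    set p' := (e j).2 with hpd'
    set A := Finset.univ.filter (fun t : Fin n => (t : ℕ) ≤ p ∧ q < (w t : ℕ)) with hA
    set B := Finset.univ.filter (fun t : Fin n => (t : ℕ) ≤ p' ∧ q' < (w t : ℕ)) with hB
    set C := Finset.univ.filter
      (fun t : Fin n => (t : ℕ) ≤ p ∧ q' < (w t : ℕ) ∧ (w t : ℕ) ≤ q) with hC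
    set D := Finset.univ.filter
      (fun t : Fin n => p < (t : ℕ) ∧ (t : ℕ) ≤ p' ∧ q' < (w t : ℕ)) with hD
    have hBsub : B ⊆ (A ∪ C) ∪ D := by
      intro t ht
      simp only [hA, hB, hC, hD, Finset.mem_union, Finset.mem_filter, Finset.mem_univ,
        true_and] at ht ⊢
      by_cases h1 : (t : ℕ) ≤ p
      · by_cases h2 : q < (w t : ℕ)
        · exact Or.inl (Or.inl ⟨h1, h2⟩)
        · exact Or.inl (Or.inr ⟨h1, ht.2, by omega⟩)
      · exact Or.inr ⟨by omega, ht.1, ht.2⟩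
    have hcardB : B.card ≤ A.card + C.card + D.card :=
      (Finset.card_le_card hBsub).trans ((Finset.card_union_le _ _).trans
        (Nat.add_le_add_right (Finset.card_union_le _ _) _))
    have hCcard : C.card ≤ q - q' - 1 := by
      have h1 : C.card ≤ (Finset.Ioo q' q).card := by
        apply Finset.card_le_card_of_injOn (fun t => (w t : ℕ))
        · intro t ht
          simp only [Finset.mem_coe, hC, Finset.mem_filter, Finset.mem_univ, true_and] at ht
          rw [Finset.mem_coe, Finset.mem_Ioo]
          refine ⟨ht.2.1, lt_of_le_of_ne ht.2.2 ?_⟩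
          intro hval
          have h2 : w t = ⟨q, hqni⟩ := Fin.ext hval
          have h3 : t = w.symm ⟨q, hqni⟩ := by rw [← h2]; simp
          rw [h3] at ht
          exact absurd hwii (not_lt.mpr ht.1)
        · intro a _ b _ hab
          exact w.injective (Fin.val_injective hab)
      simpa [Nat.card_Ioo] using h1
    have hKey : B.card < A.card + (q - q') + (p' - p) := by
      rcases lt_or_eq_of_le hqq with hqlt | hqeq
      · have hDcard : D.card ≤ p' - p := by
          have h1 : D.card ≤ (Finset.Ioc p p').card := by
            apply Finset.card_le_card_of_injOn (fun t : Fin n => (t : ℕ))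
            · intro t ht
              simp only [Finset.mem_coe, hD, Finset.mem_filter, Finset.mem_univ, true_and] at ht
              exact Finset.mem_Ioc.mpr ⟨ht.1, ht.2.1⟩
            · intro a _ b _ hab
              exact Fin.val_injective hab
          simpa [Nat.card_Ioc] using h1
        omega
      · have hplt : p < p' := by
          rcases lt_or_eq_of_le hpp with h | h
          · exact h
          · exact absurd (hinj (Prod.ext_iff.mpr ⟨hqeq.symm, h⟩)) hij.ne
        obtain ⟨hp1n0, hwcol0⟩ := ess_col (hess i)
        have hp1n : p + 1 < n := hp1n0
        have hwcol : (w ⟨p + 1, hp1n⟩ : ℕ) ≤ q := hwcol0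
        have hDcard : D.card ≤ p' - p - 1 := by
          have h1 : D.card ≤ ((Finset.Ioc p p').erase (p + 1)).card := by
            apply Finset.card_le_card_of_injOn (fun t : Fin n => (t : ℕ))
            · intro t ht
              simp only [Finset.mem_coe, hD, Finset.mem_filter, Finset.mem_univ, true_and] at ht
              rw [Finset.mem_coe, Finset.mem_erase, Finset.mem_Ioc]
              refine ⟨?_, ht.1, ht.2.1⟩
              intro hval
              have h2 : t = ⟨p + 1, hp1n⟩ := Fin.ext hval
              rw [h2] at ht
              have h3 := ht.2.2
              omega
            · intro a _ b _ hab
              exact Fin.val_injective hab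
          have h2 : ((Finset.Ioc p p').erase (p + 1)).card = (Finset.Ioc p p').card - 1 :=
            Finset.card_erase_of_mem (Finset.mem_Ioc.mpr ⟨by omega, by omega⟩)
          rw [h2, Nat.card_Ioc] at h1
          exact h1
        omega
    have hkA : kfn w q p = A.card := rfl
    have hkB : kfn w q' p' = B.card := rfl
    rw [hkA, hkB]
    omega
  -- (d) positivity
  have hpos : ∀ i : Fin s, (e i).2 + 1 ≤ (e i).1 + kfn w (e i).1 (e i).2 := by
    intro i
    obtain ⟨hpn, hqn, hw1, hw2⟩ := F i
    set q := (e i).1 with hqd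
    set p := (e i).2 with hpd
    set A := Finset.univ.filter (fun t : Fin n => (t : ℕ) ≤ p ∧ q < (w t : ℕ)) with hA
    set E := Finset.univ.filter (fun t : Fin n => (t : ℕ) ≤ p ∧ (w t : ℕ) ≤ q) with hE
    have hdisj : Disjoint A E := by
      rw [Finset.disjoint_left]
      intro t htA htE
      have h1 := (Finset.mem_filter.mp htA).2.2
      have h2 := (Finset.mem_filter.mp htE).2.2
      omega
    have hsub : Finset.Iic (⟨p, hpn⟩ : Fin n) ⊆ A ∪ E := by
      intro t ht
      rw [Finset.mem_Iic, Fin.le_def] at ht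
      simp only [hA, hE, Finset.mem_union, Finset.mem_filter, Finset.mem_univ, true_and]
      rcases le_or_gt ((w t : ℕ)) q with h | h
      · exact Or.inr ⟨ht, h⟩
      · exact Or.inl ⟨ht, h⟩
    have hcard1 := Finset.card_le_card hsub
    rw [Fin.card_Iic, Finset.card_union_of_disjoint hdisj] at hcard1
    have hcard1' : p + 1 ≤ A.card + E.card := hcard1
    have hEcard : E.card ≤ q := by
      have h1 : E.card ≤ (Finset.range q).card := by
        apply Finset.card_le_card_of_injOn (fun t => (w t : ℕ))
        · intro t ht
          simp only [Finset.mem_coe, hE, Finset.mem_filter, Finset.mem_univ, true_and] at ht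
          rw [Finset.mem_coe, Finset.mem_range]
          refine lt_of_le_of_ne ht.2 ?_
          intro hval
          have h2 : w t = ⟨q, hqn⟩ := Fin.ext hval
          have h3 : t = w.symm ⟨q, hqn⟩ := by rw [← h2]; simp
          rw [h3] at ht
          exact absurd hw2 (not_lt.mpr ht.1)
        · intro a _ b _ hab
          exact w.injective (Fin.val_injective hab)
      simpa using h1
    have hkA : kfn w q p = A.card := rfl
    rw [hkA]
    omega
  refine ⟨hlt, ?_, hdec, ?_⟩
  · intro i
    unfold kfn
    exact (Finset.card_filter_le _ _).trans (by simp)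
  · intro i
    have h := hpos i
    omega
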